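/- Let t > 0 and let X₁, …, X_K be independent nonnegative random variables where X_k = A_k + B_k with A_k ~ Exp(c_k), B_k ~ Exp(u_k) independent, all rates positive, c_k ≠ u_k. Then E[min(t, X₁, X₂, X₃, …, X_K)] ≥ E[min(t, X', X₃, …, X_K)], where X' = A' + B' with A' ~ Exp(c₁+c₂), B' ~ Exp(u₁+u₂) independent of the other variables. Consequently, merging two parallel routes into one route with summed rates decreases the expected user waiting time. -/

import Mathlib

open MeasureTheory ProbabilityTheory

lemma expMeasure_Iio_zero (r : ℝ) : expMeasure r (Set.Iio 0) = 0 := by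
  rw [expMeasure, gammaMeasure, withDensity_apply _ measurableSet_Iio]
  exact lintegral_gammaPDF_of_nonpos le_rfl

lemma expMeasure_Ioi {r : ℝ} (hr : 0 < r) (x : ℝ) :
    expMeasure r (Set.Ioi x) = ENNReal.ofReal (Real.exp (-(r * max x 0))) := by
  haveI := isProbabilityMeasure_expMeasure hr
  have hcdf : cdf (expMeasure r) x = if 0 ≤ x then 1 - Real.exp (-(r * x)) else 0 :=
    cdf_expMeasure_eq hr x
  have hIic : expMeasure r (Set.Iic x)
      = ENNReal.ofReal (if 0 ≤ x then 1 - Real.exp (-(r * x)) else 0) := by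
    rw [← ofReal_cdf (expMeasure r) x, hcdf]
  have hcompl : Set.Ioi x = (Set.Iic x)ᶜ := Set.compl_Iic.symm
  rw [hcompl, prob_compl_eq_one_sub measurableSet_Iic, hIic]
  split_ifs with h
  · rw [max_eq_left h, ENNReal.ofReal_sub 1 (Real.exp_nonneg _), ENNReal.ofReal_one]
    exact ENNReal.sub_sub_cancel ENNReal.one_ne_top
      (ENNReal.ofReal_le_one.mpr (Real.exp_le_one_iff.mpr
        (neg_nonpos.mpr (mul_nonneg hr.le h))))
  · rw [max_eq_right (le_of_lt (not_le.mp h))]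
    simp

lemma map_min_exp {Ω : Type*} [MeasurableSpace Ω] (μ : Measure Ω) [IsProbabilityMeasure μ]
    {f g : Ω → ℝ} {a b : ℝ} (ha : 0 < a) (hb : 0 < b) (hf : Measurable f) (hg : Measurable g)
    (hmf : μ.map f = expMeasure a) (hmg : μ.map g = expMeasure b)
    (hind : IndepFun f g μ) :
    μ.map (fun ω => min (f ω) (g ω)) = expMeasure (a + b) := by
  haveI := isProbabilityMeasure_expMeasure (add_pos ha hb)
  haveI : IsProbabilityMeasure (μ.map fun ω => min (f ω) (g ω)) :=
    Measure.isProbabilityMeasure_map (hf.min hg).aemeasurable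
  refine MeasureTheory.Measure.ext_of_Iic _ _ (fun x => ?_)
  have h1 : μ (f ⁻¹' Set.Ioi x) = ENNReal.ofReal (Real.exp (-(a * max x 0))) := by
    rw [← Measure.map_apply hf measurableSet_Ioi, hmf, expMeasure_Ioi ha]
  have h2 : μ (g ⁻¹' Set.Ioi x) = ENNReal.ofReal (Real.exp (-(b * max x 0))) := by
    rw [← Measure.map_apply hg measurableSet_Ioi, hmg, expMeasure_Ioi hb]
  have hco : (fun ω => min (f ω) (g ω)) ⁻¹' Set.Iic x
      = (f ⁻¹' Set.Ioi x ∩ g ⁻¹' Set.Ioi x)ᶜ := by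
    ext ω
    simp only [Set.mem_preimage, Set.mem_Iic, Set.mem_compl_iff, Set.mem_inter_iff,
      Set.mem_Ioi, not_and_or, not_lt, min_le_iff]
  rw [Measure.map_apply (hf.min hg) measurableSet_Iic, hco,
    prob_compl_eq_one_sub ((hf measurableSet_Ioi).inter (hg measurableSet_Ioi)),
    hind.measure_inter_preimage_eq_mul _ _ measurableSet_Ioi measurableSet_Ioi,
    h1, h2, ← ENNReal.ofReal_mul (Real.exp_nonneg _), ← Real.exp_add]
  have : Set.Iic x = (Set.Ioi x)ᶜ := Set.compl_Ioi.symm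
  rw [this, prob_compl_eq_one_sub measurableSet_Ioi, expMeasure_Ioi (add_pos ha hb)]
  congr 2
  ring_nf

/-- Merging two parallel routes into one route with summed rates decreases the
expected user waiting time within a source cycle of length `t`:
`E[min(t, X₁, X₂, X₃, …, X_K)] ≥ E[min(t, X', X₃, …, X_K)]` where
`X_k = A_k + B_k` with `A_k ~ Exp(c_k)`, `B_k ~ Exp(u_k)` and
`X' = A' + B'` with `A' ~ Exp(c₁+c₂)`, `B' ~ Exp(u₁+u₂)`, all variables
mutually independent. -/
theorem merging_routes_decreases_waiting_time
    {Ω : Type*} [MeasurableSpace Ω] (μ : Measure Ω) [IsProbabilityMeasure μ]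
    (K : ℕ) (hK : 2 ≤ K)
    (c u : Fin K → ℝ) (hc : ∀ k, 0 < c k) (hu : ∀ k, 0 < u k) (hcu : ∀ k, c k ≠ u k)
    (A B : Fin K → Ω → ℝ) (A' B' : Ω → ℝ)
    (hAm : ∀ k, Measurable (A k)) (hBm : ∀ k, Measurable (B k))
    (hA'm : Measurable A') (hB'm : Measurable B')
    (hA : ∀ k, μ.map (A k) = expMeasure (c k))
    (hB : ∀ k, μ.map (B k) = expMeasure (u k))
    (hA' : μ.map A' = expMeasure (c ⟨0, by omega⟩ + c ⟨1, by omega⟩))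
    (hB' : μ.map B' = expMeasure (u ⟨0, by omega⟩ + u ⟨1, by omega⟩))
    (hind : iIndepFun
      (Sum.elim (Sum.elim A B) (fun b : Bool => if b then B' else A')) μ)
    (t : ℝ) (ht : 0 < t) :
    ∫ ω, min t (⨅ k, (A k ω + B k ω)) ∂μ ≥
      ∫ ω, min t (⨅ k : Fin K,
        if (k : ℕ) < 2 then A' ω + B' ω else A k ω + B k ω) ∂μ := by
  classical
  haveI : Nonempty (Fin K) := ⟨⟨0, by omega⟩⟩
  set k0 : Fin K := ⟨0, by omega⟩ with hk0def
  set k1 : Fin K := ⟨1, by omega⟩ with hk1def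
  set F : (Fin K ⊕ Fin K) ⊕ Bool → Ω → ℝ :=
    Sum.elim (Sum.elim A B) (fun b : Bool => if b then B' else A') with hFdef
  have hFm : ∀ i, Measurable (F i) := by
    rintro ((k | k) | b)
    · exact hAm k
    · exact hBm k
    · cases b
      · simpa [F] using hA'm
      · simpa [F] using hB'm
  have hFA' : F (Sum.inr false) = A' := by simp [F]
  have hFB' : F (Sum.inr true) = B' := by simp [F]
  -- pointwise infimum characterization
  have lt_iInf : ∀ (v : Fin K → ℝ) (s : ℝ), (s < ⨅ k, v k) ↔ ∀ k, s < v k := by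
    intro v s
    constructor
    · intro h k
      exact lt_of_lt_of_le h (ciInf_le (Set.finite_range v).bddBelow k)
    · intro h
      obtain ⟨i, hi⟩ := Finite.exists_min v
      have : (⨅ k, v k) = v i :=
        le_antisymm (ciInf_le (Set.finite_range v).bddBelow i) (le_ciInf hi)
      rw [this]; exact h i
  -- a.e. nonnegativity
  have aeNonneg : ∀ (f : Ω → ℝ) (r : ℝ), Measurable f → μ.map f = expMeasure r →
      0 ≤ᵐ[μ] f := by
    intro f r hfm hmap
    have h0 : μ (f ⁻¹' Set.Iio 0) = 0 := by
      rw [← Measure.map_apply hfm measurableSet_Iio, hmap, expMeasure_Iio_zero]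
    refine ae_iff.mpr ?_
    simp only [Pi.zero_apply, not_le]
    exact h0
  have hAnn : ∀ k, 0 ≤ᵐ[μ] A k := fun k => aeNonneg _ _ (hAm k) (hA k)
  have hBnn : ∀ k, 0 ≤ᵐ[μ] B k := fun k => aeNonneg _ _ (hBm k) (hB k)
  have hA'nn : 0 ≤ᵐ[μ] A' := aeNonneg _ _ hA'm hA'
  have hB'nn : 0 ≤ᵐ[μ] B' := aeNonneg _ _ hB'm hB'
  -- the two integrands
  set fL : Ω → ℝ := fun ω => min t (⨅ k, (A k ω + B k ω)) with hfLdef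
  set fR : Ω → ℝ := fun ω => min t (⨅ k : Fin K,
      if (k : ℕ) < 2 then A' ω + B' ω else A k ω + B k ω) with hfRdef
  have hfLm : Measurable fL := by
    apply measurable_const.min
    exact Measurable.iInf (fun k => (hAm k).add (hBm k))
  have hfRm : Measurable fR := by
    apply measurable_const.min
    apply Measurable.iInf
    intro k
    by_cases hk : (k : ℕ) < 2
    · simp only [if_pos hk]; exact hA'm.add hB'm
    · simp only [if_neg hk]; exact (hAm k).add (hBm k)
  have hfLnn : 0 ≤ᵐ[μ] fL := by
    filter_upwards [ae_all_iff.mpr hAnn, ae_all_iff.mpr hBnn] with ω h1 h2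
    exact le_min ht.le (le_ciInf fun k => add_nonneg (h1 k) (h2 k))
  have hfRnn : 0 ≤ᵐ[μ] fR := by
    filter_upwards [ae_all_iff.mpr hAnn, ae_all_iff.mpr hBnn, hA'nn, hB'nn]
      with ω h1 h2 h3 h4
    refine le_min ht.le (le_ciInf fun k => ?_)
    by_cases hk : (k : ℕ) < 2
    · simp only [if_pos hk]; exact add_nonneg h3 h4
    · simp only [if_neg hk]; exact add_nonneg (h1 k) (h2 k)
  -- index blocks
  set S : Finset ((Fin K ⊕ Fin K) ⊕ Bool) :=
    {Sum.inl (Sum.inl k0), Sum.inl (Sum.inl k1), Sum.inl (Sum.inr k0),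
      Sum.inl (Sum.inr k1), Sum.inr false, Sum.inr true} with hSdef
  set T : Finset ((Fin K ⊕ Fin K) ⊕ Bool) :=
    ((Finset.univ.filter fun k : Fin K => ¬ (k : ℕ) < 2).image
        fun k => Sum.inl (Sum.inl k)) ∪
      ((Finset.univ.filter fun k : Fin K => ¬ (k : ℕ) < 2).image
        fun k => Sum.inl (Sum.inr k)) with hTdef
  have hST : Disjoint S T := by
    rw [Finset.disjoint_left]
    intro a haS haT
    simp only [hTdef, Finset.mem_union, Finset.mem_image, Finset.mem_filter,
      Finset.mem_univ, true_and] at haT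
    simp only [hSdef, Finset.mem_insert, Finset.mem_singleton] at haS
    rcases haT with ⟨k, hk, rfl⟩ | ⟨k, hk, rfl⟩ <;>
      rcases haS with h | h | h | h | h | h <;>
      simp_all [Sum.inl.injEq, Fin.ext_iff, hk0def, hk1def]
  have hblock : IndepFun (fun ω (i : S) => F i ω) (fun ω (i : T) => F i ω) μ :=
    hind.indepFun_finset S T hST hFm
  -- coordinates in the blocks
  have miA0 : Sum.inl (Sum.inl k0) ∈ S := by simp [hSdef]
  have miA1 : Sum.inl (Sum.inl k1) ∈ S := by simp [hSdef]
  have miB0 : Sum.inl (Sum.inr k0) ∈ S := by simp [hSdef]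
  have miB1 : Sum.inl (Sum.inr k1) ∈ S := by simp [hSdef]
  have miA' : Sum.inr false ∈ S := by simp [hSdef]
  have miB' : Sum.inr true ∈ S := by simp [hSdef]
  set iA0 : ↥S := ⟨_, miA0⟩
  set iA1 : ↥S := ⟨_, miA1⟩
  set iB0 : ↥S := ⟨_, miB0⟩
  set iB1 : ↥S := ⟨_, miB1⟩
  set iA' : ↥S := ⟨_, miA'⟩
  set iB' : ↥S := ⟨_, miB'⟩
  have mjA : ∀ k : Fin K, ¬ (k : ℕ) < 2 → Sum.inl (Sum.inl k) ∈ T := fun k hk =>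
    Finset.mem_union_left _ (Finset.mem_image_of_mem _
      (Finset.mem_filter.mpr ⟨Finset.mem_univ k, hk⟩))
  have mjB : ∀ k : Fin K, ¬ (k : ℕ) < 2 → Sum.inl (Sum.inr k) ∈ T := fun k hk =>
    Finset.mem_union_right _ (Finset.mem_image_of_mem _
      (Finset.mem_filter.mpr ⟨Finset.mem_univ k, hk⟩))
  -- events
  set Ep : ℝ → Set Ω := fun s => {ω | s < A' ω + B' ω} with hEpdef
  set Em : ℝ → Set Ω := fun s =>
    {ω | s < min (A k0 ω) (A k1 ω) + min (B k0 ω) (B k1 ω)} with hEmdef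
  set Rp : ℝ → Set Ω := fun s =>
    {ω | ∀ k : Fin K, ¬ (k : ℕ) < 2 → s < A k ω + B k ω} with hRpdef
  have hMT : ∀ s : ℝ, MeasurableSet {v : ↥T → ℝ | ∀ (k : Fin K) (hk : ¬ (k : ℕ) < 2),
      s < v ⟨Sum.inl (Sum.inl k), mjA k hk⟩ + v ⟨Sum.inl (Sum.inr k), mjB k hk⟩} := by
    intro s
    have heq : {v : ↥T → ℝ | ∀ (k : Fin K) (hk : ¬ (k : ℕ) < 2),
        s < v ⟨Sum.inl (Sum.inl k), mjA k hk⟩ + v ⟨Sum.inl (Sum.inr k), mjB k hk⟩}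
        = ⋂ (k : Fin K), ⋂ (hk : ¬ (k : ℕ) < 2),
          {v : ↥T → ℝ | s < v ⟨Sum.inl (Sum.inl k), mjA k hk⟩
            + v ⟨Sum.inl (Sum.inr k), mjB k hk⟩} := by
      ext v
      simp only [Set.mem_setOf_eq, Set.mem_iInter]
    rw [heq]
    exact MeasurableSet.iInter fun k => MeasurableSet.iInter fun hk =>
      measurableSet_lt measurable_const (by fun_prop)
  have hRpre : ∀ s : ℝ, Rp s = (fun ω (i : ↥T) => F i ω) ⁻¹'
      {v : ↥T → ℝ | ∀ (k : Fin K) (hk : ¬ (k : ℕ) < 2),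
        s < v ⟨Sum.inl (Sum.inl k), mjA k hk⟩ + v ⟨Sum.inl (Sum.inr k), mjB k hk⟩} :=
    fun s => rfl
  have hEpre : ∀ s : ℝ, Ep s = (fun ω (i : ↥S) => F i ω) ⁻¹'
      {v : ↥S → ℝ | s < v ⟨Sum.inr false, miA'⟩ + v ⟨Sum.inr true, miB'⟩} := by
    intro s
    ext ω
    simp only [hEpdef, Set.mem_setOf_eq, Set.mem_preimage]
    rw [hFA', hFB']
  have hEmpre : ∀ s : ℝ, Em s = (fun ω (i : ↥S) => F i ω) ⁻¹'
      {v : ↥S → ℝ | s < min (v ⟨Sum.inl (Sum.inl k0), miA0⟩) (v ⟨Sum.inl (Sum.inl k1), miA1⟩)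
        + min (v ⟨Sum.inl (Sum.inr k0), miB0⟩) (v ⟨Sum.inl (Sum.inr k1), miB1⟩)} :=
    fun s => rfl
  have C1 : ∀ s : ℝ, μ (Ep s ∩ Rp s) = μ (Ep s) * μ (Rp s) := by
    intro s
    rw [hEpre s, hRpre s]
    exact hblock.measure_inter_preimage_eq_mul _ _
      (measurableSet_lt measurable_const (by fun_prop)) (hMT s)
  have C2 : ∀ s : ℝ, μ (Em s ∩ Rp s) = μ (Em s) * μ (Rp s) := by
    intro s
    rw [hEmpre s, hRpre s]
    exact hblock.measure_inter_preimage_eq_mul _ _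
      (measurableSet_lt measurable_const (by fun_prop)) (hMT s)
  -- law identification: (min A0 A1, min B0 B1) and (A', B') have the same law
  have hmapminA : μ.map (fun ω => min (A k0 ω) (A k1 ω)) = expMeasure (c k0 + c k1) := by
    refine map_min_exp μ (hc k0) (hc k1) (hAm k0) (hAm k1) (hA k0) (hA k1) ?_
    exact hind.indepFun (by simp [hk0def, hk1def, Fin.ext_iff] :
      (Sum.inl (Sum.inl k0) : (Fin K ⊕ Fin K) ⊕ Bool) ≠ Sum.inl (Sum.inl k1))
  have hmapminB : μ.map (fun ω => min (B k0 ω) (B k1 ω)) = expMeasure (u k0 + u k1) := by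
    refine map_min_exp μ (hu k0) (hu k1) (hBm k0) (hBm k1) (hB k0) (hB k1) ?_
    exact hind.indepFun (by simp [hk0def, hk1def, Fin.ext_iff] :
      (Sum.inl (Sum.inr k0) : (Fin K ⊕ Fin K) ⊕ Bool) ≠ Sum.inl (Sum.inr k1))
  have hminAm : Measurable (fun ω => min (A k0 ω) (A k1 ω)) := (hAm k0).min (hAm k1)
  have hminBm : Measurable (fun ω => min (B k0 ω) (B k1 ω)) := (hBm k0).min (hBm k1)
  have hminm : Measurable (fun p : ℝ × ℝ => min p.1 p.2) := measurable_fst.min measurable_snd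
  have indApairs : IndepFun (fun ω => (A k0 ω, A k1 ω)) (fun ω => (B k0 ω, B k1 ω)) μ :=
    hind.indepFun_prodMk_prodMk hFm (Sum.inl (Sum.inl k0)) (Sum.inl (Sum.inl k1))
      (Sum.inl (Sum.inr k0)) (Sum.inl (Sum.inr k1))
      (by simp) (by simp) (by simp) (by simp)
  have indmin : IndepFun (fun ω => min (A k0 ω) (A k1 ω))
      (fun ω => min (B k0 ω) (B k1 ω)) μ := indApairs.comp hminm hminm
  have hmapPairMin : μ.map (fun ω => (min (A k0 ω) (A k1 ω), min (B k0 ω) (B k1 ω)))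
      = (expMeasure (c k0 + c k1)).prod (expMeasure (u k0 + u k1)) := by
    rw [(indepFun_iff_map_prod_eq_prod_map_map hminAm.aemeasurable
      hminBm.aemeasurable).mp indmin, hmapminA, hmapminB]
  have indA'B' : IndepFun A' B' μ := by
    have h := hind.indepFun
      (show (Sum.inr false : (Fin K ⊕ Fin K) ⊕ Bool) ≠ Sum.inr true by simp)
    rwa [hFA', hFB'] at h
  have hmapPair' : μ.map (fun ω => (A' ω, B' ω))
      = (expMeasure (c k0 + c k1)).prod (expMeasure (u k0 + u k1)) := by
    rw [(indepFun_iff_map_prod_eq_prod_map_map hA'm.aemeasurable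
      hB'm.aemeasurable).mp indA'B', hA', hB']
  have C3 : ∀ s : ℝ, μ (Em s) = μ (Ep s) := by
    intro s
    have hMadd : MeasurableSet {p : ℝ × ℝ | s < p.1 + p.2} :=
      measurableSet_lt measurable_const (measurable_fst.add measurable_snd)
    have h1 : μ (Em s) = μ.map (fun ω => (min (A k0 ω) (A k1 ω), min (B k0 ω) (B k1 ω)))
        {p : ℝ × ℝ | s < p.1 + p.2} := by
      rw [Measure.map_apply (hminAm.prodMk hminBm) hMadd]
      rfl
    have h2 : μ (Ep s) = μ.map (fun ω => (A' ω, B' ω)) {p : ℝ × ℝ | s < p.1 + p.2} := by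
      rw [Measure.map_apply (hA'm.prodMk hB'm) hMadd]
      rfl
    rw [h1, h2, hmapPairMin, hmapPair']
  -- the key survival-measure comparison
  have key : ∀ s : ℝ, μ {ω | s < fR ω} ≤ μ {ω | s < fL ω} := by
    intro s
    by_cases hst : s < t
    · have hsetR : {ω | s < fR ω} = Ep s ∩ Rp s := by
        ext ω
        simp only [hfRdef, hEpdef, hRpdef, Set.mem_setOf_eq, Set.mem_inter_iff,
          lt_min_iff, lt_iInf]
        constructor
        · rintro ⟨-, h⟩
          refine ⟨?_, fun k hk => ?_⟩
          · have h0 := h k0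
            rwa [if_pos (by simp [hk0def])] at h0
          · have hknot := h k
            rwa [if_neg hk] at hknot
        · rintro ⟨h1, h2⟩
          refine ⟨hst, fun k => ?_⟩
          by_cases hk : (k : ℕ) < 2
          · rw [if_pos hk]; exact h1
          · rw [if_neg hk]; exact h2 k hk
      have hsubL : Em s ∩ Rp s ⊆ {ω | s < fL ω} := by
        rintro ω ⟨h1, h2⟩
        simp only [hEmdef, hRpdef, Set.mem_setOf_eq] at h1 h2
        simp only [hfLdef, Set.mem_setOf_eq, lt_min_iff, lt_iInf]
        refine ⟨hst, fun k => ?_⟩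
        by_cases hk : (k : ℕ) < 2
        · have hcase : k = k0 ∨ k = k1 := by
            have : (k : ℕ) = 0 ∨ (k : ℕ) = 1 := by omega
            rcases this with h | h
            · exact Or.inl (Fin.ext_iff.mpr (by simp [hk0def, h]))
            · exact Or.inr (Fin.ext_iff.mpr (by simp [hk1def, h]))
          rcases hcase with rfl | rfl
          · exact lt_of_lt_of_le h1 (add_le_add (min_le_left _ _) (min_le_left _ _))
          · exact lt_of_lt_of_le h1 (add_le_add (min_le_right _ _) (min_le_right _ _))
        · exact h2 k hk
      calc μ {ω | s < fR ω} = μ (Ep s ∩ Rp s) := by rw [hsetR]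
        _ = μ (Ep s) * μ (Rp s) := C1 s
        _ = μ (Em s) * μ (Rp s) := by rw [C3 s]
        _ = μ (Em s ∩ Rp s) := (C2 s).symm
        _ ≤ μ {ω | s < fL ω} := measure_mono hsubL
    · have h1 : {ω | s < fR ω} = ∅ :=
        Set.eq_empty_iff_forall_notMem.mpr fun ω h =>
          hst (lt_of_lt_of_le h (min_le_left _ _))
      simp [h1]
  -- assemble via the layer cake formula
  rw [ge_iff_le,
    integral_eq_lintegral_of_nonneg_ae hfRnn hfRm.aestronglyMeasurable,
    integral_eq_lintegral_of_nonneg_ae hfLnn hfLm.aestronglyMeasurable]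
  have hfin : ∫⁻ ω, ENNReal.ofReal (fL ω) ∂μ ≠ ⊤ := by
    have hb : ∫⁻ ω, ENNReal.ofReal (fL ω) ∂μ ≤ ENNReal.ofReal t := by
      calc ∫⁻ ω, ENNReal.ofReal (fL ω) ∂μ ≤ ∫⁻ _, ENNReal.ofReal t ∂μ :=
            lintegral_mono fun ω => ENNReal.ofReal_le_ofReal (min_le_left _ _)
        _ = ENNReal.ofReal t := by simp
    exact (lt_of_le_of_lt hb ENNReal.ofReal_lt_top).ne
  refine ENNReal.toReal_mono hfin ?_
  rw [lintegral_eq_lintegral_meas_lt μ hfRnn hfRm.aemeasurable,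
    lintegral_eq_lintegral_meas_lt μ hfLnn hfLm.aemeasurable]
  exact lintegral_mono fun s => key s
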